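/- Let \(\mathcal{F}\) be an \(\ell\)-shifted intersecting family of k-element subsets of [n] with \(n \ge 4k + \ell\), and let \(S_1, S_2 \subseteq [\ell]\) be disjoint. Then either \(d_{S_1}(\mathcal{F}) \le 2^{k-|S_2|}\binom{n-\ell-k+|S_2|}{k-\ell+|S_2|-1}\) or \(d_{S_2}(\mathcal{F}) \le 2^{k-|S_1|}\binom{n-\ell-k+|S_1|}{k-\ell+|S_1|-1}\). -/
import Mathlib

open Finset

def shiftSet (F : Finset (Finset ℕ)) (i j : ℕ) (A : Finset ℕ) : Finset ℕ :=
  if i ∈ A ∧ j ∉ A ∧ (insert j A).erase i ∉ F then (insert j A).erase i else A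

def shiftFam (F : Finset (Finset ℕ)) (i j : ℕ) : Finset (Finset ℕ) :=
  F.image (shiftSet F i j)

def IntersectingFam (F : Finset (Finset ℕ)) : Prop :=
  ∀ A ∈ F, ∀ B ∈ F, (A ∩ B).Nonempty

def TIntersecting (t : ℕ) (F : Finset (Finset ℕ)) : Prop :=
  ∀ A ∈ F, ∀ B ∈ F, t ≤ (A ∩ B).card

def IsShifted (ℓ n : ℕ) (F : Finset (Finset ℕ)) : Prop :=
  ∀ i ∈ Icc 1 n, ∀ j ∈ Icc 1 ℓ, i ∉ Icc 1 ℓ → shiftFam F i j = F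

def deg (F : Finset (Finset ℕ)) (i : ℕ) : ℕ := (F.filter (fun A => i ∈ A)).card

def dS (F : Finset (Finset ℕ)) (ℓ : ℕ) (S : Finset ℕ) : ℕ :=
  (F.filter (fun A => A ∩ Icc 1 ℓ = S)).card

lemma inter_union_sdiff' (s t : Finset ℕ) : s ∩ t ∪ s \ t = s := by
  ext x; simp only [mem_union, mem_inter, mem_sdiff]; tauto

lemma shift_mem {F : Finset (Finset ℕ)} {ℓ n : ℕ} (hsh : IsShifted ℓ n F)
    {A : Finset ℕ} (hA : A ∈ F) (hAn : A ⊆ Icc 1 n) {i j : ℕ}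
    (hi : i ∈ A) (hiL : i ∉ Icc 1 ℓ) (hj : j ∈ Icc 1 ℓ) (hjA : j ∉ A) :
    (insert j A).erase i ∈ F := by
  by_cases h : (insert j A).erase i ∈ F
  · exact h
  · have h2 : shiftSet F i j A ∈ shiftFam F i j := mem_image_of_mem _ hA
    rw [hsh i (hAn hi) j hj hiL] at h2
    rw [shiftSet, if_pos ⟨hi, hjA, h⟩] at h2
    exact absurd h2 h

lemma trace_lemma {F : Finset (Finset ℕ)} {ℓ n : ℕ} (hln : ℓ ≤ n)
    (hF : ∀ A ∈ F, A ⊆ Icc 1 n)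
    (hsh : IsShifted ℓ n F) (hint : IntersectingFam F) :
    ∀ c : ℕ, ∀ A ∈ F, ∀ B ∈ F,
      Disjoint (A ∩ Icc 1 ℓ) (B ∩ Icc 1 ℓ) → (A ∩ B).card = c →
      ℓ + 1 ≤ (A ∩ Icc 1 ℓ).card + (B ∩ Icc 1 ℓ).card + c := by
  intro c
  induction c with
  | zero =>
    intro A hA B hB _ hc
    exact absurd (card_eq_zero.mp hc) (hint A hA B hB).ne_empty
  | succ c ih =>
    intro A hA B hB hdis hc
    by_contra hcon
    push_neg at hcon
    -- pick i ∈ A ∩ B; i ∉ Icc 1 ℓ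
    have hne : (A ∩ B).Nonempty := hint A hA B hB
    obtain ⟨i, hi⟩ := hne
    have hiA : i ∈ A := (mem_inter.mp hi).1
    have hiB : i ∈ B := (mem_inter.mp hi).2
    have hiL : i ∉ Icc 1 ℓ := by
      intro hiL
      exact (disjoint_left.mp hdis (mem_inter.mpr ⟨hiA, hiL⟩))
        (mem_inter.mpr ⟨hiB, hiL⟩)
    -- find j ∈ Icc 1 ℓ \ (A ∪ B)
    have hcard : ((A ∪ B) ∩ Icc 1 ℓ).card < ℓ := by
      have : (A ∪ B) ∩ Icc 1 ℓ = (A ∩ Icc 1 ℓ) ∪ (B ∩ Icc 1 ℓ) := by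
        rw [union_inter_distrib_right]
      rw [this, card_union_of_disjoint hdis]
      omega
    have hss : ¬ (Icc 1 ℓ ⊆ (A ∪ B)) := by
      intro hss
      have : Icc 1 ℓ ⊆ (A ∪ B) ∩ Icc 1 ℓ := fun x hx => mem_inter.mpr ⟨hss hx, hx⟩
      have := card_le_card this
      simp [Nat.card_Icc] at this
      omega
    obtain ⟨j, hjL, hjAB⟩ := not_subset.mp hss
    have hjA : j ∉ A := fun h => hjAB (mem_union_left _ h)
    have hjB : j ∉ B := fun h => hjAB (mem_union_right _ h)
    set A' := (insert j A).erase i with hA'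
    have hA'F : A' ∈ F := shift_mem hsh hA (hF A hA) hiA hiL hjL hjA
    have hij : i ≠ j := fun h => hiL (h ▸ hjL)
    have hA'L : A' ∩ Icc 1 ℓ = insert j (A ∩ Icc 1 ℓ) := by
      ext x
      simp only [hA', mem_inter, mem_erase, mem_insert]
      constructor
      · rintro ⟨⟨hxi, hx | hx⟩, hxL⟩
        · exact Or.inl hx
        · exact Or.inr ⟨hx, hxL⟩
      · rintro (rfl | ⟨hx, hxL⟩)
        · exact ⟨⟨hij.symm, Or.inl rfl⟩, hjL⟩
        · exact ⟨⟨fun h => hiL (h ▸ hxL), Or.inr hx⟩, hxL⟩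
    have hA'B : A' ∩ B = (A ∩ B).erase i := by
      ext x
      simp only [hA', mem_inter, mem_erase, mem_insert]
      constructor
      · rintro ⟨⟨hxi, hx | hx⟩, hxB⟩
        · exact absurd (hx ▸ hxB) hjB
        · exact ⟨hxi, hx, hxB⟩
      · rintro ⟨hxi, hx, hxB⟩
        exact ⟨⟨hxi, Or.inr hx⟩, hxB⟩
    have hdis' : Disjoint (A' ∩ Icc 1 ℓ) (B ∩ Icc 1 ℓ) := by
      rw [hA'L]
      rw [disjoint_insert_left]
      exact ⟨fun h => hjB (mem_inter.mp h).1, hdis⟩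
    have hc' : (A' ∩ B).card = c := by
      rw [hA'B, card_erase_of_mem hi, hc]
      omega
    have := ih A' hA'F B hB hdis' hc'
    rw [hA'L, card_insert_of_notMem (fun h => hjA (mem_inter.mp h).1)] at this
    omega

lemma choose_mono_left {M r d : ℕ} (hrd : r ≤ d) (hd : 2 * d ≤ M) :
    Nat.choose M r ≤ Nat.choose M d := by
  induction d with
  | zero => simp_all
  | succ d ih =>
    rcases Nat.lt_or_ge r (d + 1) with h | h
    · refine le_trans (ih (by omega) (by omega)) ?_
      exact Nat.choose_le_succ_of_lt_half_left (by omega)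
    · have : r = d + 1 := by omega
      subst this; exact le_rfl

theorem stmt11 (n k ℓ : ℕ) (hn : 4 * k + ℓ ≤ n)
    (F : Finset (Finset ℕ))
    (hF : ∀ A ∈ F, A ⊆ Icc 1 n) (hunif : ∀ A ∈ F, A.card = k)
    (hsh : IsShifted ℓ n F) (hint : IntersectingFam F)
    (S₁ S₂ : Finset ℕ) (hS₁ : S₁ ⊆ Icc 1 ℓ) (hS₂ : S₂ ⊆ Icc 1 ℓ)
    (hdisj : Disjoint S₁ S₂) :
    dS F ℓ S₁ ≤ 2 ^ (k - S₂.card) *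
        Nat.choose (n + S₂.card - ℓ - k) (k + S₂.card - ℓ - 1) ∨
    dS F ℓ S₂ ≤ 2 ^ (k - S₁.card) *
        Nat.choose (n + S₁.card - ℓ - k) (k + S₁.card - ℓ - 1) := by
  by_cases hB : ∃ B ∈ F, B ∩ Icc 1 ℓ = S₂
  · left
    obtain ⟨B₀, hB₀F, hB₀L⟩ := hB
    have hB₀n := hF B₀ hB₀F
    have hB₀k := hunif B₀ hB₀F
    have hs₂k : S₂.card ≤ k := by
      rw [← hB₀L, ← hB₀k]; exact card_le_card (inter_subset_left)
    -- fiber decomposition over T = A ∩ B₀ ⊆ B₀ \ Icc 1 ℓ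
    set L := Icc 1 ℓ with hL
    set F₁ := F.filter (fun A => A ∩ L = S₁) with hF₁
    have hmaps : ∀ A ∈ F₁, A ∩ B₀ ∈ (B₀ \ L).powerset := by
      intro A hA
      rw [mem_powerset]
      intro x hx
      rw [mem_inter] at hx
      rw [mem_sdiff]
      refine ⟨hx.2, fun hxL => ?_⟩
      have hAL : A ∩ L = S₁ := (mem_filter.mp hA).2
      exact disjoint_left.mp hdisj (hAL ▸ mem_inter.mpr ⟨hx.1, hxL⟩)
        (hB₀L ▸ mem_inter.mpr ⟨hx.2, hxL⟩)
    have hdecomp : F₁.card = ∑ T ∈ (B₀ \ L).powerset,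
        (F₁.filter (fun A => A ∩ B₀ = T)).card :=
      card_eq_sum_card_fiberwise hmaps
    set M := n + S₂.card - ℓ - k with hM
    set d := k + S₂.card - ℓ - 1 with hd
    have hLn : L ⊆ Icc 1 n := by
      rw [hL]; exact Icc_subset_Icc le_rfl (by omega)
    have hLB₀ : (L ∪ B₀).card = ℓ + k - S₂.card := by
      rw [card_union, hB₀k]
      have : L ∩ B₀ = S₂ := by rw [inter_comm, hB₀L]
      rw [this, Nat.card_Icc]
      omega
    have hX : (Icc 1 n \ (L ∪ B₀)).card = M := by
      rw [card_sdiff_of_subset (union_subset hLn hB₀n), hLB₀, Nat.card_Icc]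
      omega
    -- each fiber is small
    have hfiber : ∀ T ∈ (B₀ \ L).powerset,
        (F₁.filter (fun A => A ∩ B₀ = T)).card ≤ Nat.choose M d := by
      intro T hT
      rcases (F₁.filter (fun A => A ∩ B₀ = T)).eq_empty_or_nonempty with he | hne
      · rw [he]; simp
      · obtain ⟨A₀, hA₀⟩ := hne
        simp only [mem_filter, hF₁] at hA₀
        obtain ⟨⟨hA₀F, hA₀L⟩, hA₀T⟩ := hA₀
        -- trace lemma gives |T| ≥ ℓ + 1 - |S₁| - |S₂|
        have hdisAB : Disjoint (A₀ ∩ L) (B₀ ∩ L) := by rw [hA₀L, hB₀L]; exact hdisj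
        have htr := trace_lemma (ℓ := ℓ) (n := n) (by omega) hF hsh hint
          (A₀ ∩ B₀).card A₀ hA₀F B₀ hB₀F hdisAB rfl
        rw [hA₀L, hB₀L, hA₀T] at htr
        -- injection into powersetCard
        have hinj : ∀ A ∈ F₁.filter (fun A => A ∩ B₀ = T),
            A \ (L ∪ B₀) ∈ (Icc 1 n \ (L ∪ B₀)).powersetCard (k - S₁.card - T.card) := by
          intro A hA
          simp only [mem_filter, hF₁] at hA
          obtain ⟨⟨hAF, hAL⟩, hAT⟩ := hA
          rw [mem_powersetCard]
          constructor
          · exact sdiff_subset_sdiff (hF A hAF) le_rfl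
          · have h1 : A = (A ∩ (L ∪ B₀)) ∪ (A \ (L ∪ B₀)) := by
              exact (inter_union_sdiff' _ _).symm
            have h2 : A ∩ (L ∪ B₀) = S₁ ∪ T := by
              rw [inter_union_distrib_left, hAL, hAT]
            have h3 : Disjoint S₁ T := by
              refine disjoint_left.mpr fun x hx hxT => ?_
              have := mem_powerset.mp hT hxT
              exact (mem_sdiff.mp this).2 (hS₁ hx)
            have h4 : Disjoint (A ∩ (L ∪ B₀)) (A \ (L ∪ B₀)) :=
              disjoint_of_subset_left inter_subset_right sdiff_disjoint.symm
            have := hunif A hAF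
            rw [h1, card_union_of_disjoint (h2 ▸ h4), h2,
              card_union_of_disjoint h3] at this
            omega
        have hc1 := card_le_card_of_injOn (fun A => A \ (L ∪ B₀)) hinj ?_
        · refine le_trans hc1 ?_
          rw [card_powersetCard, hX]
          refine choose_mono_left (by omega) (by omega)
        · intro A hA A' hA' heq
          simp only [mem_coe, mem_filter, hF₁] at hA hA'
          have hrec : ∀ C : Finset ℕ, C ∈ F → C ∩ L = S₁ → C ∩ B₀ = T →
              C = (S₁ ∪ T) ∪ (C \ (L ∪ B₀)) := by
            intro C hCF hCL hCT
            rw [← hCL, ← hCT, ← inter_union_distrib_left, inter_union_sdiff' _ _]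
          rw [hrec A hA.1.1 hA.1.2 hA.2, hrec A' hA'.1.1 hA'.1.2 hA'.2,
            show A \ (L ∪ B₀) = A' \ (L ∪ B₀) from heq]
    calc dS F ℓ S₁ = F₁.card := rfl
      _ = ∑ T ∈ (B₀ \ L).powerset, (F₁.filter (fun A => A ∩ B₀ = T)).card := hdecomp
      _ ≤ ∑ _T ∈ (B₀ \ L).powerset, Nat.choose M d := sum_le_sum hfiber
      _ = (B₀ \ L).powerset.card * Nat.choose M d := by rw [sum_const, smul_eq_mul]
      _ = 2 ^ (k - S₂.card) * Nat.choose M d := by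
          have h5 : (B₀ \ L).card + (B₀ ∩ L).card = B₀.card :=
            card_sdiff_add_card_inter _ _
          rw [hB₀L, hB₀k] at h5
          have h6 : (B₀ \ L).card = k - S₂.card := by omega
          rw [card_powerset, h6]
  · right
    push_neg at hB
    have : dS F ℓ S₂ = 0 := by
      rw [dS, card_eq_zero, filter_eq_empty_iff]
      exact fun A hA => hB A hA
    omega
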